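/- If b is a De Bruijn cycle of order n over Q = {0,...,q−1} and f : Q^n → Q is number-conserving, then Σ_{(x_1,...,x_n) ∈ Q^n} f(x_1,...,x_n) = (0 + 1 + ... + (q−1)) · q^{n−1}. -/

import Mathlib

def NumberConserving (q n : ℕ) (f : (Fin n → Fin q) → Fin q) : Prop :=
  ∀ L, n ≤ L → ∀ x : ℕ → Fin q,
    ∑ i ∈ Finset.range L, ((f fun k => x ((i + k.val) % L)) : ℕ)
      = ∑ i ∈ Finset.range L, (x i : ℕ)

theorem stmt_12 (q n : ℕ) (hq : 0 < q) (hn : 0 < n)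
    (b : Fin (q ^ n) → Fin q)
    (hb : Function.Bijective
      (fun (i : Fin (q ^ n)) (k : Fin n) =>
        b ⟨(i.val + k.val) % q ^ n, Nat.mod_lt _ (pow_pos hq n)⟩))
    (f : (Fin n → Fin q) → Fin q) (hf : NumberConserving q n f) :
    ∑ x : Fin n → Fin q, (f x : ℕ) = (∑ i ∈ Finset.range q, i) * q ^ (n - 1) := by
  obtain ⟨m, rfl⟩ : ∃ m, n = m + 1 := ⟨n - 1, (Nat.succ_pred_eq_of_pos hn).symm⟩
  rcases Nat.lt_or_ge q 2 with hq2 | hq2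
  · interval_cases q
    simp [Fin.val_eq_zero]
  · have hLpos : 0 < q ^ (m + 1) := pow_pos hq _
    have hnL : m + 1 ≤ q ^ (m + 1) := le_of_lt (Nat.lt_pow_self hq2)
    have key := hf _ hnL (fun i => b ⟨i % q ^ (m + 1), Nat.mod_lt _ hLpos⟩)
    have lhs : ∑ i ∈ Finset.range (q ^ (m + 1)),
        ((f fun k => b ⟨(i + k.val) % q ^ (m + 1) % q ^ (m + 1), Nat.mod_lt _ hLpos⟩) : ℕ)
        = ∑ x : Fin (m + 1) → Fin q, (f x : ℕ) := by
      rw [← Fin.sum_univ_eq_sum_range (fun i =>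
        ((f fun k => b ⟨(i + k.val) % q ^ (m + 1) % q ^ (m + 1), Nat.mod_lt _ hLpos⟩) : ℕ))]
      refine Fintype.sum_bijective _ hb _ _ (fun i => ?_)
      exact congrArg (fun y => ((f y : Fin q) : ℕ)) (funext fun k =>
        congrArg b (Fin.ext (Nat.mod_mod_of_dvd _ dvd_rfl)))
    have rhs : ∑ i ∈ Finset.range (q ^ (m + 1)),
        ((b ⟨i % q ^ (m + 1), Nat.mod_lt _ hLpos⟩ : Fin q) : ℕ)
        = ∑ x : Fin (m + 1) → Fin q, (x 0 : ℕ) := by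
      rw [← Fin.sum_univ_eq_sum_range (fun i =>
        ((b ⟨i % q ^ (m + 1), Nat.mod_lt _ hLpos⟩ : Fin q) : ℕ))]
      refine Fintype.sum_bijective _ hb _ _ (fun i => ?_)
      exact congrArg (fun j => ((b j : Fin q) : ℕ)) (Fin.ext (by simp))
    have final : ∑ x : Fin (m + 1) → Fin q, (x 0 : ℕ)
        = (∑ i ∈ Finset.range q, i) * q ^ m := by
      have h1 : (∑ x : Fin (m + 1) → Fin q, (x 0 : ℕ))
          = ∑ p : Fin q × (Fin m → Fin q), (p.1 : ℕ) := by
        refine Fintype.sum_bijective (Fin.consEquiv (fun _ => Fin q)).symm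
          (Equiv.bijective _) _ _ (fun x => rfl)
      rw [h1, Fintype.sum_prod_type]
      simp only [Finset.sum_const, Finset.card_univ, smul_eq_mul]
      rw [← Finset.mul_sum, Fin.sum_univ_eq_sum_range (fun i => (i : ℕ))]
      simp [mul_comm]
    rw [← lhs, key, Nat.add_sub_cancel, ← final, ← rhs]
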